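/- Let G : X → Y → Set O be a tight game correspondence (X, Y, O finite nonempty, G x y ≠ ∅ for all x, y, and the hypergraphs C x = ⋃_y G x y and D y = ⋃_x G x y satisfy (t') and (t'')). Then for all utility functions u_A, u_B : O → ℝ there exist x* ∈ X, y* ∈ Y and o* ∈ O such that G x* y* = {o*}, every o' ∈ G x' y* for any x' ∈ X satisfies u_A o' ≤ u_A o*, and every o' ∈ G x* y' for any y' ∈ Y satisfies u_B o' ≤ u_B o*. (Every tight game correspondence has a simple Nash equilibrium for every payoff, which is a Nash equilibrium of every game form g ∈ G.) -/

import Mathlib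

section GameAux

open Set

variable {X Y O : Type*}

/-- Row hypergraph edge restricted to a finite set of columns. -/
private def CC (G : X → Y → Set O) (YS : Finset Y) (x : X) : Set O := ⋃ y ∈ YS, G x y

/-- Column hypergraph edge restricted to a finite set of rows. -/
private def DD (G : X → Y → Set O) (XS : Finset X) (y : Y) : Set O := ⋃ x ∈ XS, G x y

/-- All outcomes of the restricted game. -/
private def OM (G : X → Y → Set O) (XS : Finset X) (YS : Finset Y) : Set O :=
  ⋃ x ∈ XS, CC G YS x

private lemma mem_CC {G : X → Y → Set O} {YS : Finset Y} {x : X} {o : O} :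
    o ∈ CC G YS x ↔ ∃ y ∈ YS, o ∈ G x y := by simp [CC]

private lemma mem_DD {G : X → Y → Set O} {XS : Finset X} {y : Y} {o : O} :
    o ∈ DD G XS y ↔ ∃ x ∈ XS, o ∈ G x y := by simp [DD]

private lemma mem_OM {G : X → Y → Set O} {XS : Finset X} {YS : Finset Y} {o : O} :
    o ∈ OM G XS YS ↔ ∃ x ∈ XS, ∃ y ∈ YS, o ∈ G x y := by simp [OM, CC]

private lemma CC_mono {G : X → Y → Set O} {YS' YS : Finset Y} (h : YS' ⊆ YS) (x : X) :
    CC G YS' x ⊆ CC G YS x := by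
  intro o ho
  obtain ⟨y, hy, hoy⟩ := mem_CC.1 ho
  exact mem_CC.2 ⟨y, h hy, hoy⟩

private lemma DD_mono {G : X → Y → Set O} {XS' XS : Finset X} (h : XS' ⊆ XS) (y : Y) :
    DD G XS' y ⊆ DD G XS y := by
  intro o ho
  obtain ⟨x, hx, hox⟩ := mem_DD.1 ho
  exact mem_DD.2 ⟨x, h hx, hox⟩

private lemma OM_mono_right {G : X → Y → Set O} {XS : Finset X} {YS' YS : Finset Y}
    (h : YS' ⊆ YS) : OM G XS YS' ⊆ OM G XS YS := by
  intro o ho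
  obtain ⟨x, hx, y, hy, hoy⟩ := mem_OM.1 ho
  exact mem_OM.2 ⟨x, hx, y, h hy, hoy⟩

private lemma OM_mono_left {G : X → Y → Set O} {XS' XS : Finset X} {YS : Finset Y}
    (h : XS' ⊆ XS) : OM G XS' YS ⊆ OM G XS YS := by
  intro o ho
  obtain ⟨x, hx, y, hy, hoy⟩ := mem_OM.1 ho
  exact mem_OM.2 ⟨x, h hx, y, hy, hoy⟩

private lemma CC_subset_OM {G : X → Y → Set O} {XS : Finset X} {YS : Finset Y} {x : X}
    (hx : x ∈ XS) : CC G YS x ⊆ OM G XS YS := by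
  intro o ho
  obtain ⟨y, hy, hoy⟩ := mem_CC.1 ho
  exact mem_OM.2 ⟨x, hx, y, hy, hoy⟩

private lemma DD_subset_OM {G : X → Y → Set O} {XS : Finset X} {YS : Finset Y} {y : Y}
    (hy : y ∈ YS) : DD G XS y ⊆ OM G XS YS := by
  intro o ho
  obtain ⟨x, hx, hox⟩ := mem_DD.1 ho
  exact mem_OM.2 ⟨x, hx, y, hy, hox⟩

/-- The key induction: every tight (restricted) game correspondence has a simple
Nash equilibrium, for injective payoffs valued in arbitrary linear orders. -/
private theorem NEaux [Finite O] {κA κB : Type*} [LinearOrder κA] [LinearOrder κB]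
    (G : X → Y → Set O) (hG : ∀ x y, (G x y).Nonempty)
    (vA : O → κA) (vB : O → κB)
    (hvA : Function.Injective vA) (hvB : Function.Injective vB) :
    ∀ (n : ℕ) (XS : Finset X) (YS : Finset Y), XS.Nonempty → YS.Nonempty →
    XS.card + YS.card ≤ n →
    (∀ D' : Set O, D' ⊆ OM G XS YS →
      (∀ x ∈ XS, (D' ∩ CC G YS x).Nonempty) → ∃ y ∈ YS, DD G XS y ⊆ D') →
    (∀ C' : Set O, C' ⊆ OM G XS YS →
      (∀ y ∈ YS, (C' ∩ DD G XS y).Nonempty) → ∃ x ∈ XS, CC G YS x ⊆ C') →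
    ∃ x ∈ XS, ∃ y ∈ YS, ∃ o : O,
      G x y = {o} ∧
      (∀ x' ∈ XS, ∀ o' ∈ G x' y, vA o' ≤ vA o) ∧
      (∀ y' ∈ YS, ∀ o' ∈ G x y', vB o' ≤ vB o) ∧
      (∀ o' ∈ CC G YS x, o' ∈ DD G XS y → o' = o) := by
  intro n
  induction n with
  | zero =>
    intro XS YS hXSne hYSne hcard _ _
    have := hXSne.card_pos
    omega
  | succ n IH =>
    intro XS YS hXSne hYSne hcard ht' ht''
    classical
    -- minimizers of vB on the columns
    have hDne : ∀ y : Y, (DD G XS y).Nonempty := by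
      intro y
      obtain ⟨x, hx⟩ := hXSne
      obtain ⟨o, ho⟩ := hG x y
      exact ⟨o, mem_DD.2 ⟨x, hx, ho⟩⟩
    have hmex : ∀ y : Y, ∃ o ∈ DD G XS y, ∀ o' ∈ DD G XS y, vB o ≤ vB o' := by
      intro y
      exact Set.exists_min_image (DD G XS y) vB (Set.toFinite _) (hDne y)
    choose m hm1 hm2 using hmex
    obtain ⟨y₀, hy₀, hy₀max⟩ := YS.exists_max_image (fun y => vB (m y)) hYSne
    set YS' : Finset Y := YS.filter (fun y => vB (m y₀) ≤ vB (m y)) with hYS'def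
    have hYS'sub : YS' ⊆ YS := Finset.filter_subset _ _
    have hy₀' : y₀ ∈ YS' := Finset.mem_filter.2 ⟨hy₀, le_refl _⟩
    have hDYS' : ∀ y ∈ YS', ∀ o ∈ DD G XS y, vB (m y₀) ≤ vB o := by
      intro y hy o ho
      exact le_trans (Finset.mem_filter.1 hy).2 (hm2 y o ho)
    have hnotYS' : ∀ y ∈ YS, y ∉ YS' → vB (m y) < vB (m y₀) := by
      intro y hy hy'
      by_contra h
      exact hy' (Finset.mem_filter.2 ⟨hy, not_lt.1 h⟩)
    have hOMsub : ∀ o ∈ OM G XS YS', vB (m y₀) ≤ vB o := by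
      intro o ho
      obtain ⟨x, hx, y, hy, hoy⟩ := mem_OM.1 ho
      exact hDYS' y hy o (mem_DD.2 ⟨x, hx, hoy⟩)
    by_cases hfix : YS' = YS
    · -- all column minima are equal: p := m y₀ lies in every column
      have hp : ∀ y ∈ YS, m y₀ ∈ DD G XS y := by
        intro y hy
        have hyY : y ∈ YS' := by rw [hfix]; exact hy
        have h1 : vB (m y₀) ≤ vB (m y) := (Finset.mem_filter.1 hyY).2
        have h2 : vB (m y) ≤ vB (m y₀) := hy₀max y hy
        have : m y = m y₀ := hvB (le_antisymm h2 h1)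
        exact this ▸ hm1 y
      -- minimizers of vA on the rows
      have hCne : ∀ x : X, (CC G YS x).Nonempty := by
        intro x
        obtain ⟨y, hy⟩ := hYSne
        obtain ⟨o, ho⟩ := hG x y
        exact ⟨o, mem_CC.2 ⟨y, hy, ho⟩⟩
      have hcex : ∀ x : X, ∃ o ∈ CC G YS x, ∀ o' ∈ CC G YS x, vA o ≤ vA o' := by
        intro x
        exact Set.exists_min_image (CC G YS x) vA (Set.toFinite _) (hCne x)
      choose c hc1 hc2 using hcex
      obtain ⟨x₀, hx₀, hx₀max⟩ := XS.exists_max_image (fun x => vA (c x)) hXSne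
      set XS' : Finset X := XS.filter (fun x => vA (c x₀) ≤ vA (c x)) with hXS'def
      have hXS'sub : XS' ⊆ XS := Finset.filter_subset _ _
      have hx₀' : x₀ ∈ XS' := Finset.mem_filter.2 ⟨hx₀, le_refl _⟩
      have hCXS' : ∀ x ∈ XS', ∀ o ∈ CC G YS x, vA (c x₀) ≤ vA o := by
        intro x hx o ho
        exact le_trans (Finset.mem_filter.1 hx).2 (hc2 x o ho)
      have hnotXS' : ∀ x ∈ XS, x ∉ XS' → vA (c x) < vA (c x₀) := by
        intro x hx hx'
        by_contra h
        exact hx' (Finset.mem_filter.2 ⟨hx, not_lt.1 h⟩)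
      by_cases hfix2 : XS' = XS
      · -- double fixed point: direct construction
        have hq : ∀ x ∈ XS, c x₀ ∈ CC G YS x := by
          intro x hx
          have hxX : x ∈ XS' := by rw [hfix2]; exact hx
          have h1 : vA (c x₀) ≤ vA (c x) := (Finset.mem_filter.1 hxX).2
          have h2 : vA (c x) ≤ vA (c x₀) := hx₀max x hx
          have : c x = c x₀ := hvA (le_antisymm h2 h1)
          exact this ▸ hc1 x
        obtain ⟨yt, hyt, hytsub⟩ := ht' {c x₀}
          (by
            intro o ho
            rcases ho with rfl
            exact CC_subset_OM hx₀ (hc1 x₀))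
          (by
            intro x hx
            exact ⟨c x₀, rfl, hq x hx⟩)
        obtain ⟨xt, hxt, hxtsub⟩ := ht'' {m y₀}
          (by
            intro o ho
            rcases ho with rfl
            exact DD_subset_OM hy₀ (hm1 y₀))
          (by
            intro y hy
            exact ⟨m y₀, rfl, hp y hy⟩)
        obtain ⟨o, ho⟩ := hG xt yt
        have hoC : o ∈ CC G YS xt := mem_CC.2 ⟨yt, hyt, ho⟩
        have hoD : o ∈ DD G XS yt := mem_DD.2 ⟨xt, hxt, ho⟩
        have hom : o = m y₀ := hxtsub hoC
        have hoc : o = c x₀ := hytsub hoD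
        refine ⟨xt, hxt, yt, hyt, o, ?_, ?_, ?_, ?_⟩
        · apply Set.eq_singleton_iff_nonempty_unique_mem.2
          refine ⟨⟨o, ho⟩, ?_⟩
          intro o' ho'
          have : o' ∈ ({m y₀} : Set O) := hxtsub (mem_CC.2 ⟨yt, hyt, ho'⟩)
          rcases this with rfl
          exact hom.symm
        · intro x' hx' o' ho'
          have : o' ∈ ({c x₀} : Set O) := hytsub (mem_DD.2 ⟨x', hx', ho'⟩)
          rcases this with rfl
          exact hoc ▸ le_refl _
        · intro y' hy' o' ho'
          have : o' ∈ ({m y₀} : Set O) := hxtsub (mem_CC.2 ⟨y', hy', ho'⟩)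
          rcases this with rfl
          exact hom ▸ le_refl _
        · intro o' ho'C _
          have : o' ∈ ({m y₀} : Set O) := hxtsub ho'C
          rcases this with rfl
          exact hom.symm
      · -- recurse on the strictly smaller row set XS'
        have hXS'ssub : XS' ⊂ XS := (Finset.ssubset_iff_subset_ne).2 ⟨hXS'sub, hfix2⟩
        have hcard' : XS'.card < XS.card := Finset.card_lt_card hXS'ssub
        have hOMsubA : ∀ o ∈ OM G XS' YS, vA (c x₀) ≤ vA o := by
          intro o ho
          obtain ⟨x, hx, y, hy, hoy⟩ := mem_OM.1 ho
          exact hCXS' x hx o (mem_CC.2 ⟨y, hy, hoy⟩)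
        -- tightness of the restricted game
        have sub_t' : ∀ D' : Set O, D' ⊆ OM G XS' YS →
            (∀ x ∈ XS', (D' ∩ CC G YS x).Nonempty) → ∃ y ∈ YS, DD G XS' y ⊆ D' := by
          intro D' hD'Ω hD'C
          set D'' : Set O := D' ∪ {o ∈ OM G XS YS | vA o < vA (c x₀)} with hD''def
          have hD''Ω : D'' ⊆ OM G XS YS := by
            intro o ho
            rcases ho with ho | ho
            · exact OM_mono_left hXS'sub (hD'Ω ho)
            · exact ho.1
          have hD''C : ∀ x ∈ XS, (D'' ∩ CC G YS x).Nonempty := by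
            intro x hx
            by_cases hx' : x ∈ XS'
            · obtain ⟨o, ho1, ho2⟩ := hD'C x hx'
              exact ⟨o, Or.inl ho1, ho2⟩
            · refine ⟨c x, Or.inr ⟨CC_subset_OM hx (hc1 x), hnotXS' x hx hx'⟩, hc1 x⟩
          obtain ⟨y, hy, hysub⟩ := ht' D'' hD''Ω hD''C
          refine ⟨y, hy, ?_⟩
          intro o ho
          obtain ⟨x, hx, hox⟩ := mem_DD.1 ho
          have hoC : o ∈ CC G YS x := mem_CC.2 ⟨y, hy, hox⟩
          have hα : vA (c x₀) ≤ vA o := hCXS' x hx o hoC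
          have : o ∈ D'' := hysub (mem_DD.2 ⟨x, hXS'sub hx, hox⟩)
          rcases this with h | h
          · exact h
          · exact absurd h.2 (not_lt.2 hα)
        have sub_t'' : ∀ C' : Set O, C' ⊆ OM G XS' YS →
            (∀ y ∈ YS, (C' ∩ DD G XS' y).Nonempty) → ∃ x ∈ XS', CC G YS x ⊆ C' := by
          intro C' hC'Ω hC'D
          have h1 : C' ⊆ OM G XS YS := subset_trans hC'Ω (OM_mono_left hXS'sub)
          have h2 : ∀ y ∈ YS, (C' ∩ DD G XS y).Nonempty := by
            intro y hy
            exact (hC'D y hy).mono (Set.inter_subset_inter_right _ (DD_mono hXS'sub y))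
          obtain ⟨x, hx, hxsub⟩ := ht'' C' h1 h2
          refine ⟨x, ?_, hxsub⟩
          have : vA (c x₀) ≤ vA (c x) := hOMsubA (c x) (hC'Ω (hxsub (hc1 x)))
          exact Finset.mem_filter.2 ⟨hx, this⟩
        have hXS'ne : XS'.Nonempty := ⟨x₀, hx₀'⟩
        obtain ⟨xt, hxt, yt, hyt, ot, hGxy, hAcond, hBcond, huniq⟩ :=
          IH XS' YS hXS'ne hYSne (by omega) sub_t' sub_t''
        have hotmem : ot ∈ G xt yt := by rw [hGxy]; rfl
        have hαot : vA (c x₀) ≤ vA ot :=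
          hCXS' xt hxt ot (mem_CC.2 ⟨yt, hyt, hotmem⟩)
        -- lift: find a column punishing the first player globally
        set D'' : Set O :=
          {o' ∈ OM G XS YS | (vA o' < vA ot ∧ o' ∉ CC G YS xt) ∨ o' = ot} with hD''def
        have hD''Ω : D'' ⊆ OM G XS YS := fun o ho => ho.1
        have hD''C : ∀ x ∈ XS, (D'' ∩ CC G YS x).Nonempty := by
          intro x hx
          by_cases hx' : x ∈ XS'
          · obtain ⟨o', ho'⟩ := hG x yt
            have ho'C : o' ∈ CC G YS x := mem_CC.2 ⟨yt, hyt, ho'⟩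
            have ho'le : vA o' ≤ vA ot := hAcond x hx' o' ho'
            by_cases he : o' = ot
            · exact ⟨o', ⟨CC_subset_OM hx ho'C, Or.inr he⟩, ho'C⟩
            · have hlt : vA o' < vA ot := lt_of_le_of_ne ho'le (fun h => he (hvA h))
              have hnot : o' ∉ CC G YS xt := by
                intro hmem
                exact he (huniq o' hmem (mem_DD.2 ⟨x, hx', ho'⟩))
              exact ⟨o', ⟨CC_subset_OM hx ho'C, Or.inl ⟨hlt, hnot⟩⟩, ho'C⟩
          · have h1 : vA (c x) < vA (c x₀) := hnotXS' x hx hx'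
            have h2 : vA (c x) < vA ot := lt_of_lt_of_le h1 hαot
            have h3 : c x ∉ CC G YS xt := by
              intro hmem
              exact absurd (hCXS' xt hxt _ hmem) (not_le.2 h1)
            exact ⟨c x, ⟨CC_subset_OM hx (hc1 x), Or.inl ⟨h2, h3⟩⟩, hc1 x⟩
        obtain ⟨ys, hys, hyssub⟩ := ht' D'' hD''Ω hD''C
        have hsub : ∀ o' ∈ DD G XS ys, o' ∈ CC G YS xt → o' = ot := by
          intro o' ho'D ho'C
          have : o' ∈ D'' := hyssub ho'D
          rcases this.2 with h | h
          · exact absurd ho'C h.2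
          · exact h
        have hotG : ∀ o' ∈ G xt ys, o' = ot := by
          intro o' ho'
          exact hsub o' (mem_DD.2 ⟨xt, hXS'sub hxt, ho'⟩) (mem_CC.2 ⟨ys, hys, ho'⟩)
        refine ⟨xt, hXS'sub hxt, ys, hys, ot, ?_, ?_, ?_, ?_⟩
        · apply Set.eq_singleton_iff_nonempty_unique_mem.2
          exact ⟨hG xt ys, hotG⟩
        · intro x' hx' o' ho'
          have : o' ∈ D'' := hyssub (mem_DD.2 ⟨x', hx', ho'⟩)
          rcases this.2 with h | h
          · exact le_of_lt h.1
          · exact h ▸ le_refl _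
        · intro y' hy' o' ho'
          exact hBcond y' hy' o' ho'
        · intro o' ho'C ho'D
          exact hsub o' ho'D ho'C
    · -- recurse on the strictly smaller column set YS'
      have hYS'ssub : YS' ⊂ YS := (Finset.ssubset_iff_subset_ne).2 ⟨hYS'sub, hfix⟩
      have hcard' : YS'.card < YS.card := Finset.card_lt_card hYS'ssub
      -- tightness of the restricted game
      have sub_t' : ∀ D' : Set O, D' ⊆ OM G XS YS' →
          (∀ x ∈ XS, (D' ∩ CC G YS' x).Nonempty) → ∃ y ∈ YS', DD G XS y ⊆ D' := by
        intro D' hD'Ω hD'C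
        have h1 : D' ⊆ OM G XS YS := subset_trans hD'Ω (OM_mono_right hYS'sub)
        have h2 : ∀ x ∈ XS, (D' ∩ CC G YS x).Nonempty := by
          intro x hx
          exact (hD'C x hx).mono (Set.inter_subset_inter_right _ (CC_mono hYS'sub x))
        obtain ⟨y, hy, hysub⟩ := ht' D' h1 h2
        refine ⟨y, ?_, hysub⟩
        have : vB (m y₀) ≤ vB (m y) := hOMsub (m y) (hD'Ω (hysub (hm1 y)))
        exact Finset.mem_filter.2 ⟨hy, this⟩
      have sub_t'' : ∀ C' : Set O, C' ⊆ OM G XS YS' →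
          (∀ y ∈ YS', (C' ∩ DD G XS y).Nonempty) → ∃ x ∈ XS, CC G YS' x ⊆ C' := by
        intro C' hC'Ω hC'D
        set C'' : Set O := C' ∪ {o ∈ OM G XS YS | vB o < vB (m y₀)} with hC''def
        have hC''Ω : C'' ⊆ OM G XS YS := by
          intro o ho
          rcases ho with ho | ho
          · exact OM_mono_right hYS'sub (hC'Ω ho)
          · exact ho.1
        have hC''D : ∀ y ∈ YS, (C'' ∩ DD G XS y).Nonempty := by
          intro y hy
          by_cases hy' : y ∈ YS'
          · obtain ⟨o, ho1, ho2⟩ := hC'D y hy'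
            exact ⟨o, Or.inl ho1, ho2⟩
          · exact ⟨m y, Or.inr ⟨DD_subset_OM hy (hm1 y), hnotYS' y hy hy'⟩, hm1 y⟩
        obtain ⟨x, hx, hxsub⟩ := ht'' C'' hC''Ω hC''D
        refine ⟨x, hx, ?_⟩
        intro o ho
        obtain ⟨y, hy, hoy⟩ := mem_CC.1 ho
        have hβ : vB (m y₀) ≤ vB o := hDYS' y hy o (mem_DD.2 ⟨x, hx, hoy⟩)
        have : o ∈ C'' := hxsub (mem_CC.2 ⟨y, hYS'sub hy, hoy⟩)
        rcases this with h | h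
        · exact h
        · exact absurd h.2 (not_lt.2 hβ)
      have hYS'ne : YS'.Nonempty := ⟨y₀, hy₀'⟩
      obtain ⟨xt, hxt, yt, hyt, ot, hGxy, hAcond, hBcond, huniq⟩ :=
        IH XS YS' hXSne hYS'ne (by omega) sub_t' sub_t''
      have hotmem : ot ∈ G xt yt := by rw [hGxy]; rfl
      have hβot : vB (m y₀) ≤ vB ot :=
        hDYS' yt hyt ot (mem_DD.2 ⟨xt, hxt, hotmem⟩)
      -- lift: find a row punishing the second player globally
      set C'' : Set O :=
        {o' ∈ OM G XS YS | (vB o' < vB ot ∧ o' ∉ DD G XS yt) ∨ o' = ot} with hC''def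
      have hC''Ω : C'' ⊆ OM G XS YS := fun o ho => ho.1
      have hC''D : ∀ y ∈ YS, (C'' ∩ DD G XS y).Nonempty := by
        intro y hy
        by_cases hy' : y ∈ YS'
        · obtain ⟨o', ho'⟩ := hG xt y
          have ho'D : o' ∈ DD G XS y := mem_DD.2 ⟨xt, hxt, ho'⟩
          have ho'le : vB o' ≤ vB ot := hBcond y hy' o' ho'
          by_cases he : o' = ot
          · exact ⟨o', ⟨DD_subset_OM hy ho'D, Or.inr he⟩, ho'D⟩
          · have hlt : vB o' < vB ot := lt_of_le_of_ne ho'le (fun h => he (hvB h))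
            have hnot : o' ∉ DD G XS yt := by
              intro hmem
              exact he (huniq o' (mem_CC.2 ⟨y, hy', ho'⟩) hmem)
            exact ⟨o', ⟨DD_subset_OM hy ho'D, Or.inl ⟨hlt, hnot⟩⟩, ho'D⟩
        · have h1 : vB (m y) < vB (m y₀) := hnotYS' y hy hy'
          have h2 : vB (m y) < vB ot := lt_of_lt_of_le h1 hβot
          have h3 : m y ∉ DD G XS yt := by
            intro hmem
            exact absurd (hDYS' yt hyt _ hmem) (not_le.2 h1)
          exact ⟨m y, ⟨DD_subset_OM hy (hm1 y), Or.inl ⟨h2, h3⟩⟩, hm1 y⟩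
      obtain ⟨xs, hxs, hxssub⟩ := ht'' C'' hC''Ω hC''D
      have hsub : ∀ o' ∈ CC G YS xs, o' ∈ DD G XS yt → o' = ot := by
        intro o' ho'C ho'D
        have : o' ∈ C'' := hxssub ho'C
        rcases this.2 with h | h
        · exact absurd ho'D h.2
        · exact h
      have hotG : ∀ o' ∈ G xs yt, o' = ot := by
        intro o' ho'
        exact hsub o' (mem_CC.2 ⟨yt, hYS'sub hyt, ho'⟩) (mem_DD.2 ⟨xs, hxs, ho'⟩)
      refine ⟨xs, hxs, yt, hYS'sub hyt, ot, ?_, ?_, ?_, ?_⟩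
      · apply Set.eq_singleton_iff_nonempty_unique_mem.2
        exact ⟨hG xs yt, hotG⟩
      · intro x' hx' o' ho'
        exact hAcond x' hx' o' ho'
      · intro y' hy' o' ho'
        have : o' ∈ C'' := hxssub (mem_CC.2 ⟨y', hy', ho'⟩)
        rcases this.2 with h | h
        · exact le_of_lt h.1
        · exact h ▸ le_refl _
      · intro o' ho'C ho'D
        exact hsub o' ho'C ho'D

end GameAux

/-- Every tight game correspondence has, for every payoff, a simple Nash
equilibrium, which is a Nash equilibrium of every game form `g ∈ G`. -/
theorem tight_correspondence_simple_NE
    {X Y O : Type*} [Fintype X] [Fintype Y] [Fintype O]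
    [Nonempty X] [Nonempty Y] [Nonempty O]
    (G : X → Y → Set O)
    (hG : ∀ x y, (G x y).Nonempty)
    (ht' : ∀ D' : Set O, (∀ x, (D' ∩ ⋃ y, G x y).Nonempty) →
      ∃ y, (⋃ x, G x y) ⊆ D')
    (ht'' : ∀ C' : Set O, (∀ y, (C' ∩ ⋃ x, G x y).Nonempty) →
      ∃ x, (⋃ y, G x y) ⊆ C')
    (uA uB : O → ℝ) :
    ∃ (x : X) (y : Y) (o : O),
      G x y = {o} ∧
      (∀ x', ∀ o' ∈ G x' y, uA o' ≤ uA o) ∧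
      (∀ y', ∀ o' ∈ G x y', uB o' ≤ uB o) := by
  classical
  -- injective refinements of the payoff functions, valued in ℝ ×ₗ ℕ
  set e : O → ℕ := fun o => ((Fintype.equivFin O) o : ℕ) with he
  have heinj : Function.Injective e :=
    Fin.val_injective.comp (Fintype.equivFin O).injective
  set vA : O → ℝ ×ₗ ℕ := fun o => toLex (uA o, e o) with hvAdef
  set vB : O → ℝ ×ₗ ℕ := fun o => toLex (uB o, e o) with hvBdef
  have hvA : Function.Injective vA := by
    intro a b h
    exact heinj (congrArg (fun p => (ofLex p).2) h)
  have hvB : Function.Injective vB := by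
    intro a b h
    exact heinj (congrArg (fun p => (ofLex p).2) h)
  have hCuniv : ∀ x : X, CC G (Finset.univ : Finset Y) x = ⋃ y, G x y := by
    intro x; simp [CC]
  have hDuniv : ∀ y : Y, DD G (Finset.univ : Finset X) y = ⋃ x, G x y := by
    intro y; simp [DD]
  obtain ⟨x, _, y, _, o, hGeq, hA, hB, _⟩ :=
    NEaux G hG vA vB hvA hvB
      ((Finset.univ : Finset X).card + (Finset.univ : Finset Y).card)
      Finset.univ Finset.univ Finset.univ_nonempty Finset.univ_nonempty (le_refl _)
      (by
        intro D' _ hD'C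
        obtain ⟨y, hysub⟩ := ht' D' (fun x => by
          have := hD'C x (Finset.mem_univ x)
          rwa [hCuniv x] at this)
        exact ⟨y, Finset.mem_univ y, by rwa [hDuniv y]⟩)
      (by
        intro C' _ hC'D
        obtain ⟨x, hxsub⟩ := ht'' C' (fun y => by
          have := hC'D y (Finset.mem_univ y)
          rwa [hDuniv y] at this)
        exact ⟨x, Finset.mem_univ x, by rwa [hCuniv x]⟩)
  refine ⟨x, y, o, hGeq, ?_, ?_⟩
  · intro x' o' ho'
    have h := hA x' (Finset.mem_univ x') o' ho'
    rcases Prod.Lex.le_iff.1 h with h1 | h1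
    · exact le_of_lt h1
    · exact le_of_eq h1.1
  · intro y' o' ho'
    have h := hB y' (Finset.mem_univ y') o' ho'
    rcases Prod.Lex.le_iff.1 h with h1 | h1
    · exact le_of_lt h1
    · exact le_of_eq h1.1
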